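/- Fix an agent i, a price p > 0 per unit, a permutation π of {1,…,n}, and a real β > 0. Then the expected utility of agent i under sequential posted pricing satisfies E[u_i(ω,π)] ≥ β · ( E[v_i(ω)(x_i(ω))] − p·E[x_i(ω)] ) · ( 1 − e^{−1/β} − ∫_0^{1−e^{−1/β}} Pr[ Σ_{j preceding i in π} y*_j(ω) ≥ t ] dt ), for every allocation rule x. -/

import Mathlib

open MeasureTheory

/-- With agents drawing independent valuations (product space `Measure.pi μ`,
agent j's valuation `v j` depending only on the j-th coordinate), price p > 0, a permutation π
and β > 0, the expected utility of agent i under sequential posted pricing satisfies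
E[u_i] ≥ β·(E[v_i(x_i)] − p·E[x_i])·(1 − e^{−1/β} − ∫_0^{1−e^{−1/β}} Pr[Σ_{j≺i} y*_j ≥ t] dt)
for every allocation rule x. Here `S` is the total demand of the agents preceding i in π,
`y` is agent i's purchased fraction and `u` her utility. -/
theorem stmt_0
    {n : ℕ} {Ω : Fin n → Type*} [∀ j, MeasurableSpace (Ω j)]
    (μ : ∀ j, Measure (Ω j)) [∀ j, IsProbabilityMeasure (μ j)]
    (v : ∀ j, Ω j → ℝ → ℝ) (ystar : ∀ j, Ω j → ℝ) (p : ℝ) (hp : 0 < p)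
    -- valuations are a.s. nonnegative, nondecreasing and concave on [0,1]
    (hval : ∀ j, ∀ᵐ ωj ∂ μ j, (∀ z ∈ Set.Icc (0:ℝ) 1, 0 ≤ v j ωj z) ∧
        MonotoneOn (v j ωj) (Set.Icc (0:ℝ) 1) ∧ ConcaveOn ℝ (Set.Icc (0:ℝ) 1) (v j ωj))
    -- y*_j ∈ [0,1] is measurable and maximizes v_j(z) − p·z over z ∈ [0,1]
    (hystar_meas : ∀ j, Measurable (ystar j))
    (hystar : ∀ j, ∀ᵐ ωj ∂ μ j, ystar j ωj ∈ Set.Icc (0:ℝ) 1 ∧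
        ∀ z ∈ Set.Icc (0:ℝ) 1, v j ωj z - p * z ≤ v j ωj (ystar j ωj) - p * ystar j ωj)
    (π : Equiv.Perm (Fin n)) (i : Fin n) (β : ℝ) (hβ : 0 < β)
    (S y u : (∀ j, Ω j) → ℝ)
    (hS : ∀ ω, S ω = ∑ j ∈ Finset.univ.filter (fun j => π j < π i), ystar j (ω j))
    (hy : ∀ ω, y ω = min (ystar i (ω i)) (max 0 (1 - S ω)))
    (hu : ∀ ω, u ω = v i (ω i) (y ω) - p * y ω)
    -- constrained utility maximization of agent i
    (humax : ∀ᵐ ω ∂ Measure.pi μ, ∀ z ∈ Set.Icc (0:ℝ) (max 0 (1 - S ω)),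
        v i (ω i) z - p * z ≤ u ω)
    -- allocation rule
    (x : (∀ j, Ω j) → Fin n → ℝ) (hx_meas : Measurable x)
    (hx_mem : ∀ ω j, x ω j ∈ Set.Icc (0:ℝ) 1) (hx_sum : ∀ ω, ∑ j, x ω j = 1)
    -- integrability of the displayed random variables
    (hint_u : Integrable u (Measure.pi μ))
    (hint_vx : Integrable (fun ω => v i (ω i) (x ω i)) (Measure.pi μ))
    (hint_x : Integrable (fun ω => x ω i) (Measure.pi μ)) :
    ∫ ω, u ω ∂(Measure.pi μ) ≥
      β * ((∫ ω, v i (ω i) (x ω i) ∂(Measure.pi μ)) - p * ∫ ω, x ω i ∂(Measure.pi μ)) *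
        (1 - Real.exp (-1 / β) -
          ∫ t in (0:ℝ)..(1 - Real.exp (-1 / β)), ((Measure.pi μ) {ω | t ≤ S ω}).toReal) := by
  classical
  set q : ℝ := 1 - Real.exp (-1 / β) with hqdef
  have hexp_pos : 0 < Real.exp (-1 / β) := Real.exp_pos _
  have hexp_le : Real.exp (-1 / β) ≤ 1 := by
    have h0 : -1 / β < 0 := div_neg_of_neg_of_pos (by norm_num) hβ
    have := Real.exp_le_exp.2 h0.le
    simpa using this
  have hq0 : 0 ≤ q := by simp only [hqdef]; linarith
  have hq1 : q < 1 := by simp only [hqdef]; linarith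
  have hβq : β * q ≤ 1 := by
    have h1 := Real.add_one_le_exp (-1 / β)
    have h2 : β * (-1 / β + 1) ≤ β * Real.exp (-1 / β) :=
      mul_le_mul_of_nonneg_left h1 hβ.le
    have h3 : β * (-1 / β + 1) = -1 + β := by field_simp
    simp only [hqdef]
    nlinarith
  -- measurability of S
  have hSmeas : Measurable S := by
    have : S = fun ω => ∑ j ∈ Finset.univ.filter (fun j => π j < π i), ystar j (ω j) :=
      funext hS
    rw [this]
    exact Finset.measurable_sum _ fun j _ => (hystar_meas j).comp (measurable_pi_apply j)
  -- a.e. per-coordinate facts lifted to the product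
  have hae_ystar : ∀ᵐ ω ∂ Measure.pi μ, ∀ j, ystar j (ω j) ∈ Set.Icc (0:ℝ) 1 ∧
      ∀ z ∈ Set.Icc (0:ℝ) 1, v j (ω j) z - p * z ≤ v j (ω j) (ystar j (ω j)) - p * ystar j (ω j) :=
    Filter.eventually_all.2 fun j => Measure.tendsto_eval_ae_ae.eventually (hystar j)
  have hae_vi : ∀ᵐ ω ∂ Measure.pi μ, (∀ z ∈ Set.Icc (0:ℝ) 1, 0 ≤ v i (ω i) z) ∧
      MonotoneOn (v i (ω i)) (Set.Icc (0:ℝ) 1) ∧ ConcaveOn ℝ (Set.Icc (0:ℝ) 1) (v i (ω i)) :=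
    Measure.tendsto_eval_ae_ae.eventually (hval i)
  have hae_S0 : ∀ᵐ ω ∂ Measure.pi μ, 0 ≤ S ω := by
    filter_upwards [hae_ystar] with ω h
    rw [hS]
    exact Finset.sum_nonneg fun j _ => (h j).1.1
  -- the key pointwise a.e. property
  have hKae : ∀ᵐ ω ∂ Measure.pi μ, 0 ≤ u ω ∧
      ∀ c ∈ Set.Icc (0:ℝ) 1, max 0 (1 - S ω) * (v i (ω i) c - p * c) ≤ u ω := by
    filter_upwards [humax, hae_ystar, hae_vi, hae_S0] with ω hmax hys hvi hS0
    obtain ⟨⟨hyi0, hyi1⟩, hymax⟩ := hys i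
    have hv0 : 0 ≤ v i (ω i) 0 := hvi.1 0 ⟨le_refl 0, zero_le_one⟩
    have hu0 : 0 ≤ u ω := by
      have h0 := hmax 0 ⟨le_refl 0, le_max_left 0 (1 - S ω)⟩
      linarith
    refine ⟨hu0, ?_⟩
    set r : ℝ := max 0 (1 - S ω) with hrdef
    have hr0 : 0 ≤ r := le_max_left _ _
    have hr1 : r ≤ 1 := max_le zero_le_one (by linarith)
    have hz : r * ystar i (ω i) ∈ Set.Icc (0:ℝ) (max 0 (1 - S ω)) := by
      constructor
      · exact mul_nonneg hr0 hyi0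
      · calc r * ystar i (ω i) ≤ r * 1 := mul_le_mul_of_nonneg_left hyi1 hr0
          _ = r := mul_one r
          _ = max 0 (1 - S ω) := hrdef
    have h1 := hmax (r * ystar i (ω i)) hz
    have h2 : r * v i (ω i) (ystar i (ω i)) + (1 - r) * v i (ω i) 0 ≤
        v i (ω i) (r * ystar i (ω i)) := by
      have := hvi.2.2.2 ⟨hyi0, hyi1⟩ (Set.mem_Icc.2 ⟨le_refl 0, zero_le_one⟩) hr0
        (by linarith : (0:ℝ) ≤ 1 - r) (by ring)
      simpa [smul_eq_mul] using this
    have hkey : r * (v i (ω i) (ystar i (ω i)) - p * ystar i (ω i)) ≤ u ω := by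
      nlinarith [mul_nonneg (by linarith : (0:ℝ) ≤ 1 - r) hv0]
    intro c hc
    have hcy := hymax c hc
    calc r * (v i (ω i) c - p * c)
        ≤ r * (v i (ω i) (ystar i (ω i)) - p * ystar i (ω i)) :=
          mul_le_mul_of_nonneg_left hcy hr0
      _ ≤ u ω := hkey
  have hU0 : 0 ≤ ∫ ω, u ω ∂ Measure.pi μ :=
    integral_nonneg_of_ae (hKae.mono fun ω h => h.1)
  -- the truncated shortfall W
  set W : (∀ j, Ω j) → ℝ := fun ω => max 0 (q - max 0 (S ω)) with hWdef
  have hWmeas : Measurable W :=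
    measurable_const.max (measurable_const.sub (measurable_const.max hSmeas))
  have hWnn : ∀ ω, 0 ≤ W ω := fun ω => le_max_left _ _
  have hWle : ∀ ω, W ω ≤ q := fun ω => by
    have h0 : (0:ℝ) ≤ max 0 (S ω) := le_max_left _ _
    exact max_le hq0 (by linarith)
  have hWint : Integrable W (Measure.pi μ) := by
    refine Integrable.mono' (integrable_const q) hWmeas.aestronglyMeasurable ?_
    filter_upwards with ω
    rw [Real.norm_eq_abs, abs_of_nonneg (hWnn ω)]
    exact hWle ω
  -- layer cake for W via Fubini
  haveI hfin : IsFiniteMeasure (volume.restrict (Set.Ioc (0:ℝ) q)) := by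
    constructor
    rw [Measure.restrict_apply_univ, Real.volume_Ioc]
    exact ENNReal.ofReal_lt_top
  have hmeasM : MeasurableSet {z : (∀ j, Ω j) × ℝ | S z.1 < z.2} :=
    measurableSet_lt (hSmeas.comp measurable_fst) measurable_snd
  have hint2 : Integrable (fun z : (∀ j, Ω j) × ℝ => if S z.1 < z.2 then (1:ℝ) else 0)
      ((Measure.pi μ).prod (volume.restrict (Set.Ioc (0:ℝ) q))) := by
    have heq : (fun z : (∀ j, Ω j) × ℝ => if S z.1 < z.2 then (1:ℝ) else 0) =
        Set.indicator {z : (∀ j, Ω j) × ℝ | S z.1 < z.2} (fun _ => 1) := by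
      funext z; simp [Set.indicator_apply, Set.mem_setOf_eq]
    rw [heq]
    exact (integrable_const 1).indicator hmeasM
  have hswap := integral_integral_swap
    (f := fun (ω : ∀ j, Ω j) (t : ℝ) => if S ω < t then (1:ℝ) else 0) hint2
  have hinner1 : ∀ ω : (∀ j, Ω j),
      (∫ t in Set.Ioc (0:ℝ) q, (if S ω < t then (1:ℝ) else 0)) = W ω := by
    intro ω
    have heq : (fun t : ℝ => if S ω < t then (1:ℝ) else 0) =
        Set.indicator (Set.Ioi (S ω)) (fun _ => 1) := by
      funext t; simp [Set.indicator_apply, Set.mem_Ioi]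
    rw [heq, integral_indicator measurableSet_Ioi,
      Measure.restrict_restrict measurableSet_Ioi, setIntegral_const]
    rw [Set.inter_comm, Set.Ioc_inter_Ioi, Real.volume_real_Ioc]
    simp only [smul_eq_mul, mul_one, ENNReal.toReal_ofReal']
    rw [hWdef]
    rw [max_comm (q - max 0 (S ω)) 0]
  have hinner2 : ∀ t : ℝ,
      (∫ ω, (if S ω < t then (1:ℝ) else 0) ∂ Measure.pi μ) =
        ((Measure.pi μ) {ω | S ω < t}).toReal := by
    intro t
    have heq : (fun ω => if S ω < t then (1:ℝ) else 0) =
        Set.indicator {ω | S ω < t} (fun _ => 1) := by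
      funext ω; simp [Set.indicator_apply, Set.mem_setOf_eq]
    rw [heq, integral_indicator (measurableSet_lt hSmeas measurable_const), setIntegral_const]
    simp
    rfl
  have hWC : ∫ ω, W ω ∂ Measure.pi μ =
      ∫ t in (0:ℝ)..q, ((Measure.pi μ) {ω | S ω < t}).toReal := by
    have hL : ∫ ω, W ω ∂ Measure.pi μ =
        ∫ t in Set.Ioc (0:ℝ) q, ((Measure.pi μ) {ω | S ω < t}).toReal := by
      calc ∫ ω, W ω ∂ Measure.pi μ
          = ∫ ω, (∫ t in Set.Ioc (0:ℝ) q, (if S ω < t then (1:ℝ) else 0)) ∂ Measure.pi μ := by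
            exact integral_congr_ae (Filter.Eventually.of_forall fun ω => (hinner1 ω).symm)
        _ = ∫ t in Set.Ioc (0:ℝ) q, (∫ ω, (if S ω < t then (1:ℝ) else 0) ∂ Measure.pi μ) :=
            hswap
        _ = ∫ t in Set.Ioc (0:ℝ) q, ((Measure.pi μ) {ω | S ω < t}).toReal :=
            integral_congr_ae (Filter.Eventually.of_forall fun t => hinner2 t)
    rw [hL, intervalIntegral.integral_of_le hq0]
  -- complement: P(S < t) = 1 - P(t ≤ S)
  have hcompl : ∀ t : ℝ, ((Measure.pi μ) {ω | S ω < t}).toReal =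
      1 - ((Measure.pi μ) {ω | t ≤ S ω}).toReal := by
    intro t
    have hms : MeasurableSet {ω : (∀ j, Ω j) | S ω < t} :=
      measurableSet_lt hSmeas measurable_const
    have hA := measure_add_measure_compl (μ := Measure.pi μ) hms
    have hcomp : {ω : (∀ j, Ω j) | S ω < t}ᶜ = {ω | t ≤ S ω} := by
      ext ω; simp [not_lt]
    rw [hcomp, measure_univ] at hA
    have h2 := congrArg ENNReal.toReal hA
    rw [ENNReal.toReal_add (measure_ne_top _ _) (measure_ne_top _ _)] at h2
    simp at h2
    linarith
  have hFanti : Antitone (fun t : ℝ => ((Measure.pi μ) {ω | t ≤ S ω}).toReal) := by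
    intro s t hst
    exact ENNReal.toReal_mono (measure_ne_top _ _)
      (measure_mono fun ω h => le_trans hst h)
  have hFint : IntervalIntegrable (fun t : ℝ => ((Measure.pi μ) {ω | t ≤ S ω}).toReal)
      volume 0 q := hFanti.intervalIntegrable
  have hC : ∫ ω, W ω ∂ Measure.pi μ =
      q - ∫ t in (0:ℝ)..q, ((Measure.pi μ) {ω | t ≤ S ω}).toReal := by
    rw [hWC]
    rw [intervalIntegral.integral_congr (g := fun t : ℝ =>
      1 - ((Measure.pi μ) {ω | t ≤ S ω}).toReal) (fun t _ => hcompl t)]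
    rw [intervalIntegral.integral_sub intervalIntegrable_const hFint]
    simp
  have hC0 : 0 ≤ ∫ ω, W ω ∂ Measure.pi μ := integral_nonneg hWnn
  -- E[max 0 (1 - S)] ≥ β E[W]
  have hrmeas : Measurable (fun ω => max 0 (1 - S ω)) :=
    measurable_const.max (measurable_const.sub hSmeas)
  have hrint : Integrable (fun ω => max 0 (1 - S ω)) (Measure.pi μ) := by
    refine Integrable.mono' (integrable_const 1) hrmeas.aestronglyMeasurable ?_
    filter_upwards [hae_S0] with ω hS0
    rw [Real.norm_eq_abs, abs_of_nonneg (le_max_left _ _)]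
    exact max_le zero_le_one (by linarith)
  have hrW : β * ∫ ω, W ω ∂ Measure.pi μ ≤ ∫ ω, max 0 (1 - S ω) ∂ Measure.pi μ := by
    have hptw : ∀ᵐ ω ∂ Measure.pi μ, β * W ω ≤ max 0 (1 - S ω) := by
      filter_upwards [hae_S0] with ω hS0
      rw [hWdef]
      simp only [max_eq_right hS0]
      by_cases hqs : q ≤ S ω
      · rw [max_eq_left (by linarith : q - S ω ≤ 0)]
        simp [le_max_left]
      · push_neg at hqs
        rw [max_eq_right (by linarith : (0:ℝ) ≤ q - S ω),
          max_eq_right (by linarith : (0:ℝ) ≤ 1 - S ω)]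
        rcases le_total β 1 with hβ1 | hβ1
        · nlinarith
        · nlinarith
    have := integral_mono_ae (hWint.const_mul β) hrint hptw
    rwa [integral_const_mul] at this
  -- the product-space splitting
  set e := MeasurableEquiv.piEquivPiSubtypeProd Ω (fun j => π j < π i) with hedef
  set νA := Measure.pi (fun j : {j : Fin n // π j < π i} => μ j) with hνA
  set νB := Measure.pi (fun j : {j : Fin n // ¬ π j < π i} => μ j) with hνB
  have hmp : MeasurePreserving e (Measure.pi μ) (νA.prod νB) :=
    measurePreserving_piEquivPiSubtypeProd μ (fun j => π j < π i)
  have hmps : MeasurePreserving e.symm (νA.prod νB) (Measure.pi μ) :=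
    MeasurePreserving.symm e hmp
  set ρ : (∀ j : {j : Fin n // π j < π i}, Ω j) → ℝ :=
    fun a => max 0 (1 - ∑ j : {j : Fin n // π j < π i}, ystar j.1 (a j)) with hρdef
  have hρr : ∀ ω : (∀ j, Ω j), ρ (fun j => ω j.1) = max 0 (1 - S ω) := by
    intro ω
    have hsum : ∑ j ∈ Finset.univ.filter (fun j => π j < π i), ystar j (ω j) =
        ∑ j : {j : Fin n // π j < π i}, ystar j.1 (ω j.1) :=
      Finset.sum_subtype (Finset.univ.filter fun j => π j < π i)
        (fun x => by simp [Finset.mem_filter]) (fun j => ystar j (ω j))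
    rw [hρdef, hS ω, hsum]
  have hPi : ¬ (π i < π i) := lt_irrefl _
  have hcoord : ∀ (a : ∀ j : {j : Fin n // π j < π i}, Ω j)
      (b : ∀ j : {j : Fin n // ¬ π j < π i}, Ω j), (e.symm (a, b)) i = b ⟨i, hPi⟩ :=
    fun a b => dif_neg hPi
  set w : (∀ j, Ω j) → ℝ := fun ω => v i (ω i) (x ω i) - p * x ω i with hwdef
  have hwint : Integrable w (Measure.pi μ) := hint_vx.sub (hint_x.const_mul p)
  have hu_comp : Integrable (fun z => u (e.symm z)) (νA.prod νB) :=
    (hmps.integrable_comp_emb e.symm.measurableEmbedding).2 hint_u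
  have hρmeas : Measurable ρ := by
    apply measurable_const.max
    apply measurable_const.sub
    exact Finset.measurable_sum _ fun j _ => (hystar_meas j.1).comp (measurable_pi_apply j)
  have hρint : Integrable ρ νA := by
    refine Integrable.mono' (integrable_const 1) hρmeas.aestronglyMeasurable ?_
    have hys' : ∀ᵐ a ∂ νA, ∀ j : {j : Fin n // π j < π i}, 0 ≤ ystar j.1 (a j) :=
      Filter.eventually_all.2 fun j =>
        (Measure.tendsto_eval_ae_ae
          (μ := fun j : {j : Fin n // π j < π i} => μ j) (i := j)).eventually
          ((hystar j.1).mono fun t ht => ht.1.1)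
    filter_upwards [hys'] with a ha
    have hsum : 0 ≤ ∑ j : {j : Fin n // π j < π i}, ystar j.1 (a j) :=
      Finset.sum_nonneg fun j _ => ha j
    rw [Real.norm_eq_abs, abs_of_nonneg (le_max_left _ _)]
    exact max_le zero_le_one (by linarith)
  have hρeq : ∫ a, ρ a ∂ νA = ∫ ω, max 0 (1 - S ω) ∂ Measure.pi μ := by
    have h1 := integral_prod_mul (μ := νA) (ν := νB) ρ (fun _ => (1:ℝ))
    simp only [mul_one, integral_const, measure_univ, ENNReal.toReal_one, probReal_univ, one_smul,
      smul_eq_mul] at h1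
    have h2 := hmp.integral_comp e.measurableEmbedding (fun z => ρ z.1)
    rw [← h1, ← h2]
    exact integral_congr_ae (Filter.Eventually.of_forall fun ω => hρr ω)
  set W2 : ((∀ j : {j : Fin n // π j < π i}, Ω j) × (∀ j : {j : Fin n // ¬ π j < π i}, Ω j)) → ℝ :=
    fun z => w (e.symm z) with hW2def
  have hW2 : Integrable W2 (νA.prod νB) :=
    (hmps.integrable_comp_emb e.symm.measurableEmbedding).2 hwint
  have hslice := hW2.prod_right_ae
  have hhint : Integrable (fun a => ∫ b, W2 (a, b) ∂ νB) νA := hW2.integral_prod_left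
  have hhB : ∫ a, (∫ b, W2 (a, b) ∂ νB) ∂ νA = ∫ ω, w ω ∂ Measure.pi μ := by
    have h3 := integral_integral (f := fun a b => W2 (a, b)) hW2
    have h4 := hmps.integral_comp e.symm.measurableEmbedding w
    rw [h3]
    exact h4
  -- the main a.e. inequality
  have hmain : ∀ᵐ z ∂ (νA.prod νB), ∀ a'', ρ z.1 * w (e.symm (a'', z.2)) ≤ u (e.symm z) := by
    have hKz := hmps.quasiMeasurePreserving.ae hKae
    filter_upwards [hKz] with z hK
    intro a''
    have hco : (e.symm (a'', z.2)) i = (e.symm z) i :=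
      (hcoord a'' z.2).trans (hcoord z.1 z.2).symm
    have hρz : ρ z.1 = max 0 (1 - S (e.symm z)) := by
      have hz1 : z.1 = fun j : {j : Fin n // π j < π i} => (e.symm z) j.1 :=
        (congrArg Prod.fst (e.apply_symm_apply z)).symm
      rw [hz1, hρr (e.symm z)]
    have hxm := hx_mem (e.symm (a'', z.2)) i
    have hw' : w (e.symm (a'', z.2)) =
        v i ((e.symm z) i) (x (e.symm (a'', z.2)) i) - p * x (e.symm (a'', z.2)) i := by
      simp only [hwdef]; rw [hco]
    rw [hρz, hw']
    exact hK.2 (x (e.symm (a'', z.2)) i) hxm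
  have hstep7 : ∀ᵐ a'' ∂ νA,
      (∫ a, ρ a ∂ νA) * (∫ b, W2 (a'', b) ∂ νB) ≤ ∫ ω, u ω ∂ Measure.pi μ := by
    filter_upwards [hslice] with a'' hIa
    have hintL : Integrable (fun z => ρ z.1 * W2 (a'', z.2)) (νA.prod νB) :=
      hρint.mul_prod hIa
    have hmono := integral_mono_ae hintL hu_comp (hmain.mono fun z hz => hz a'')
    rw [integral_prod_mul ρ (fun b => W2 (a'', b))] at hmono
    rwa [hmps.integral_comp e.symm.measurableEmbedding u] at hmono
  have h8 : (∫ a, ρ a ∂ νA) * (∫ ω, w ω ∂ Measure.pi μ) ≤ ∫ ω, u ω ∂ Measure.pi μ := by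
    have hmono2 := integral_mono_ae (hhint.const_mul (∫ a, ρ a ∂ νA))
      (integrable_const (∫ ω, u ω ∂ Measure.pi μ)) hstep7
    rw [integral_const_mul, hhB, integral_const, probReal_univ] at hmono2
    simpa using hmono2
  -- assemble
  have hB' : ∫ ω, w ω ∂ Measure.pi μ =
      (∫ ω, v i (ω i) (x ω i) ∂ Measure.pi μ) - p * ∫ ω, x ω i ∂ Measure.pi μ := by
    rw [hwdef]
    rw [integral_sub hint_vx (hint_x.const_mul p), integral_const_mul]
  rw [ge_iff_le, ← hB', show (1 : ℝ) - Real.exp (-1 / β) -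
      (∫ t in (0:ℝ)..(1 - Real.exp (-1 / β)), ((Measure.pi μ) {ω | t ≤ S ω}).toReal) =
      ∫ ω, W ω ∂ Measure.pi μ from by rw [hC]]
  have hEρ : β * (∫ ω, W ω ∂ Measure.pi μ) ≤ ∫ a, ρ a ∂ νA := by
    rw [hρeq]; exact hrW
  rcases le_or_gt (∫ ω, w ω ∂ Measure.pi μ) 0 with hB0 | hB0
  · have h1 : β * (∫ ω, w ω ∂ Measure.pi μ) * (∫ ω, W ω ∂ Measure.pi μ) ≤ 0 := by
      nlinarith [mul_nonneg (neg_nonneg.2 hB0) hC0,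
        mul_nonneg hβ.le (mul_nonneg (neg_nonneg.2 hB0) hC0)]
    linarith
  · calc β * (∫ ω, w ω ∂ Measure.pi μ) * (∫ ω, W ω ∂ Measure.pi μ)
        = (β * (∫ ω, W ω ∂ Measure.pi μ)) * (∫ ω, w ω ∂ Measure.pi μ) := by ring
      _ ≤ (∫ a, ρ a ∂ νA) * (∫ ω, w ω ∂ Measure.pi μ) :=
          mul_le_mul_of_nonneg_right hEρ hB0.le
      _ ≤ ∫ ω, u ω ∂ Measure.pi μ := h8
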